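/- Let S be a finite non-nested set of intervals, let t be a natural number, and let j = |{(d, a) ∈ S : a ≤ t}|. If j ≥ 1, then the pair (d*, a*), where d* is the j-th smallest departure of S and a* is the j-th smallest arrival of S, is a member of S, satisfies a* ≤ t, and is the latest interval of S ending by time t: every (d, a) ∈ S with a ≤ t satisfies a ≤ a* and d ≤ d*. (Correctness of the find_prev algorithm on the two-bit-vector representation.) -/

import Mathlib

/-- An interval `I = (d, a)` is contained in `I' = (d', a')` if `d' ≤ d` and `a ≤ a'`. -/
def Contained (I I' : ℕ × ℕ) : Prop := I'.1 ≤ I.1 ∧ I.2 ≤ I'.2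

/-- A finite set of intervals is non-nested if no member is contained in a distinct member. -/
def NonNested (S : Finset (ℕ × ℕ)) : Prop :=
  ∀ I ∈ S, ∀ I' ∈ S, I ≠ I' → ¬ Contained I I' ∧ ¬ Contained I' I

/-- The `i`-th smallest element (1-indexed) of a finite set of naturals. -/
def nthSmallest (T : Finset ℕ) (i : ℕ) : ℕ := (T.sort (· ≤ ·)).getD (i - 1) 0

lemma countP_sorted (l : List ℕ) (hl : l.Pairwise (· < ·)) :
    ∀ i (h : i < l.length), l.countP (fun y => y ≤ l.get ⟨i, h⟩) = i + 1 := by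
  induction l with
  | nil => intro i h; simp at h
  | cons a l ih =>
    intro i h
    rcases List.pairwise_cons.1 hl with ⟨ha, hl'⟩
    cases i with
    | zero =>
      rw [List.countP_cons]
      have h0 : l.countP (fun y => y ≤ (a :: l).get ⟨0, h⟩) = 0 := by
        rw [List.countP_eq_zero]
        intro y hy
        simp only [List.get] at *
        simpa using not_le.2 (ha y hy)
      simp [h0]
      exact ha
    | succ i =>
      have h' : i < l.length := by simpa using h
      have hg : (a :: l).get ⟨i+1, h⟩ = l.get ⟨i, h'⟩ := rfl
      rw [hg, List.countP_cons]
      have hle : a ≤ l.get ⟨i, h'⟩ := le_of_lt (ha _ (l.get_mem _))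
      rw [ih hl' i h']
      simp only [decide_eq_true (show a ≤ l.get ⟨i, h'⟩ from hle)]
      simp

lemma nthSmallest_eq (T : Finset ℕ) (x : ℕ) (hx : x ∈ T) (k : ℕ) (h1 : 1 ≤ k)
    (hk : (T.filter (fun y => y ≤ x)).card = k) : nthSmallest T k = x := by
  set l := T.sort (· ≤ ·) with hl
  have hsort : l.Pairwise (· < ·) := List.sortedLT_iff_pairwise.1 (Finset.sortedLT_sort T)
  have hxl : x ∈ l := (Finset.mem_sort _).2 hx
  obtain ⟨⟨m, hm⟩, hget⟩ := List.mem_iff_get.1 hxl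
  have hcnt : l.countP (fun y => y ≤ x) = k := by
    have h2 : (T.filter (fun y => y ≤ x)).card = Multiset.countP (fun y => y ≤ x) T.val := by
      rw [Multiset.countP_eq_card_filter]
      rfl
    have h3 : (↑l : Multiset ℕ) = T.val := Finset.sort_eq _ _
    rw [h2, ← h3] at hk
    simpa using hk
  have := countP_sorted l hsort m hm
  rw [hget] at this
  have hmk : m + 1 = k := by rw [← this, hcnt]
  have hm' : k - 1 < l.length := by omega
  have : nthSmallest T k = l.get ⟨k - 1, hm'⟩ := by
    rw [nthSmallest, ← hl]
    exact List.getD_eq_get (l := l) (d := 0) ⟨k - 1, hm'⟩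
  rw [this]
  have : (⟨k - 1, hm'⟩ : Fin l.length) = ⟨m, hm⟩ := by
    ext; simp; omega
  rw [this, hget]

theorem stmt4 (S : Finset (ℕ × ℕ)) (hval : ∀ I ∈ S, I.1 ≤ I.2) (hnn : NonNested S)
    (t : ℕ) (j : ℕ) (hj : j = (S.filter (fun I => I.2 ≤ t)).card) (hj1 : 1 ≤ j) :
    (nthSmallest (S.image Prod.fst) j, nthSmallest (S.image Prod.snd) j) ∈ S ∧
    nthSmallest (S.image Prod.snd) j ≤ t ∧
    (∀ I ∈ S, I.2 ≤ t →
      I.2 ≤ nthSmallest (S.image Prod.snd) j ∧ I.1 ≤ nthSmallest (S.image Prod.fst) j) := by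
  -- key monotonicity
  have mono : ∀ I ∈ S, ∀ I' ∈ S, (I.1 ≤ I'.1 ↔ I.2 ≤ I'.2) := by
    intro I hI I' hI'
    by_cases heq : I = I'
    · subst heq; simp
    · have := hnn I hI I' hI' heq
      unfold Contained at this
      constructor
      · intro h1
        by_contra h2
        exact this.2 ⟨h1, by omega⟩
      · intro h2
        by_contra h1
        exact this.1 ⟨by omega, h2⟩
  -- pick the maximal interval ending by t
  have hne : (S.filter (fun I => I.2 ≤ t)).Nonempty := by
    rw [← Finset.card_pos, ← hj]; omega
  obtain ⟨I0, hI0mem, hI0max⟩ := Finset.exists_max_image _ (fun I => I.2) hne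
  rw [Finset.mem_filter] at hI0mem
  obtain ⟨hI0S, hI0t⟩ := hI0mem
  have hmax : ∀ I ∈ S, I.2 ≤ t → I.2 ≤ I0.2 := by
    intro I hI ht
    exact hI0max I (Finset.mem_filter.2 ⟨hI, ht⟩)
  -- the filter sets coincide
  have hfe : S.filter (fun I => I.2 ≤ I0.2) = S.filter (fun I => I.2 ≤ t) := by
    apply Finset.filter_congr
    intro I hI
    constructor
    · intro h; omega
    · intro h; exact hmax I hI h
  have hcardS : (S.filter (fun I => I.2 ≤ I0.2)).card = j := by rw [hfe, hj]
  have hcardS1 : (S.filter (fun I => I.1 ≤ I0.1)).card = j := by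
    rw [← hcardS]
    congr 1
    apply Finset.filter_congr
    intro I hI
    simpa using mono I hI I0 hI0S
  -- compute nthSmallest on images
  have hsnd : nthSmallest (S.image Prod.snd) j = I0.2 := by
    apply nthSmallest_eq _ _ (Finset.mem_image_of_mem _ hI0S) _ hj1
    rw [Finset.filter_image]
    rw [Finset.card_image_of_injOn]
    · exact hcardS
    · intro a ha b hb hab
      simp only [Finset.coe_filter, Set.mem_setOf_eq] at ha hb
      have h1 := (mono a ha.1 b hb.1).2 (le_of_eq hab)
      have h2 := (mono b hb.1 a ha.1).2 (le_of_eq hab.symm)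
      exact Prod.ext (le_antisymm h1 h2) hab
  have hfst : nthSmallest (S.image Prod.fst) j = I0.1 := by
    apply nthSmallest_eq _ _ (Finset.mem_image_of_mem _ hI0S) _ hj1
    rw [Finset.filter_image]
    rw [Finset.card_image_of_injOn]
    · exact hcardS1
    · intro a ha b hb hab
      simp only [Finset.coe_filter, Set.mem_setOf_eq] at ha hb
      have h1 := (mono a ha.1 b hb.1).1 (le_of_eq hab)
      have h2 := (mono b hb.1 a ha.1).1 (le_of_eq hab.symm)
      exact Prod.ext hab (le_antisymm h1 h2)
  rw [hsnd, hfst]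
  refine ⟨by simpa using hI0S, hI0t, ?_⟩
  intro I hI ht
  refine ⟨hmax I hI ht, ?_⟩
  exact (mono I hI I0 hI0S).2 (hmax I hI ht)
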